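/- Let n ≥ 7 and let Γ_1,…,Γ_{n−2} be 3-element subsets of N = {1,…,n} satisfying condition (†), with Γ_{n−3} = {1,2,n} and Γ_{n−2} = {3,4,n}. Then for every subset S ⊆ {1,…,n−4} with 2 ≤ |S| ≤ n−5 and {1,2,3,4} ⊆ ⋃_{i∈S} Γ_i, one has |⋃_{i∈S} Γ_i| ≥ |S| + 4. -/

import Mathlib

open Finset

/-- Let `Γ_1,…,Γ_{n-2}` (n ≥ 7) be triples on `N = {1,…,n}` satisfying (†), with
`Γ_{n-3} = {1,2,n}` and `Γ_{n-2} = {3,4,n}`. Then for every `S ⊆ {1,…,n-4}` with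
`2 ≤ |S| ≤ n-5` and `{1,2,3,4} ⊆ ⋃_{i∈S} Γ_i`, one has `|⋃_{i∈S} Γ_i| ≥ |S| + 4`. -/
theorem strengthened_dagger (n : ℕ) (hn : 7 ≤ n) (Γ : ℕ → Finset ℕ)
    (hsub : ∀ j ∈ Finset.Icc 1 (n - 2), Γ j ⊆ Finset.Icc 1 n)
    (hcard : ∀ j ∈ Finset.Icc 1 (n - 2), (Γ j).card = 3)
    (hdag : ∀ S ⊆ Finset.Icc 1 (n - 2), 2 ≤ S.card → S.card ≤ n - 3 →
      S.card + 3 ≤ (S.biUnion Γ).card)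
    (h1 : Γ (n - 3) = {1, 2, n})
    (h2 : Γ (n - 2) = {3, 4, n}) :
    ∀ S ⊆ Finset.Icc 1 (n - 4), 2 ≤ S.card → S.card ≤ n - 5 →
      ({1, 2, 3, 4} : Finset ℕ) ⊆ S.biUnion Γ →
      S.card + 4 ≤ (S.biUnion Γ).card := by
  intro S hS hS2 hS5 h1234
  have hn3 : n - 3 ∉ S := fun h => by
    have := hS h; rw [Finset.mem_Icc] at this; omega
  have hn2 : (n - 2) ∉ insert (n - 3) S := by
    intro h
    rcases Finset.mem_insert.mp h with h | h
    · omega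
    · have := hS h; rw [Finset.mem_Icc] at this; omega
  set S' := insert (n - 2) (insert (n - 3) S) with hS'
  have hcardS' : S'.card = S.card + 2 := by
    rw [hS', Finset.card_insert_of_notMem hn2, Finset.card_insert_of_notMem hn3]
  have hsub' : S' ⊆ Finset.Icc 1 (n - 2) := by
    intro x hx
    rw [hS'] at hx
    rcases Finset.mem_insert.mp hx with rfl | hx
    · rw [Finset.mem_Icc]; omega
    · rcases Finset.mem_insert.mp hx with rfl | hx
      · rw [Finset.mem_Icc]; omega
      · have := hS hx; rw [Finset.mem_Icc] at this ⊢; omega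
  have hd := hdag S' hsub' (by omega) (by omega)
  have m1 : (1:ℕ) ∈ S.biUnion Γ := h1234 (by simp)
  have m2 : (2:ℕ) ∈ S.biUnion Γ := h1234 (by simp)
  have m3 : (3:ℕ) ∈ S.biUnion Γ := h1234 (by simp)
  have m4 : (4:ℕ) ∈ S.biUnion Γ := h1234 (by simp)
  have hU : S'.biUnion Γ = insert n (S.biUnion Γ) := by
    rw [hS', Finset.biUnion_insert, Finset.biUnion_insert, h1, h2]
    ext x
    simp only [Finset.mem_union, Finset.mem_insert, Finset.mem_singleton]
    constructor
    · rintro ((rfl | rfl | rfl) | (rfl | rfl | rfl) | hx) <;> tauto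
    · rintro (rfl | hx) <;> tauto
  have hle : (S'.biUnion Γ).card ≤ (S.biUnion Γ).card + 1 := by
    rw [hU]; exact Finset.card_insert_le _ _
  omega
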